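/- The function (a,b,c) ↦ |a² + bc|^{−1/2}, defined on the complement of the measure-zero set {a² + bc = 0} in ℝ³, is locally integrable on ℝ³ with respect to Lebesgue measure. (Under the identification of sl(2,ℝ) with ℝ³ via (a,b,c) ↦ [[a,b],[c,−a]], the two roots evaluated at g are ±α(g) with |α(g)| = 2·|a² + bc|^{1/2}, so this asserts that the denominator appearing in the fixed point character formula for SL(2,ℝ) gives a function in L¹_loc(sl(2,ℝ)).) -/

import Mathlib

open MeasureTheory Set Real ENNReal

noncomputable def gfun : ℝ → ℝ≥0∞ := fun u => ENNReal.ofReal (|u| ^ (-(1 : ℝ) / 2))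

lemma gfun_meas : Measurable gfun :=
  ((measurable_id.abs.pow measurable_const)).ennreal_ofReal

lemma gfun_neg (u : ℝ) : gfun (-u) = gfun u := by simp [gfun]

lemma half_int {s : ℝ} (hs : 0 ≤ s) :
    ∫⁻ u in Ioc 0 s, gfun u = ENNReal.ofReal (2 * Real.sqrt s) := by
  have hcongr : ∀ u ∈ Ioc (0:ℝ) s, gfun u = ENNReal.ofReal (u ^ (-(1:ℝ)/2)) := by
    intro u hu
    simp [gfun, abs_of_pos hu.1]
  rw [setLIntegral_congr_fun measurableSet_Ioc hcongr]
  have hint : IntegrableOn (fun u : ℝ => u ^ (-(1:ℝ)/2)) (Ioc 0 s) volume := by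
    rw [← intervalIntegrable_iff_integrableOn_Ioc_of_le hs]
    exact intervalIntegral.intervalIntegrable_rpow' (by norm_num)
  have hnn : 0 ≤ᵐ[volume.restrict (Ioc 0 s)] fun u : ℝ => u ^ (-(1:ℝ)/2) := by
    filter_upwards [self_mem_ae_restrict (measurableSet_Ioc : MeasurableSet (Ioc (0:ℝ) s))]
      with u hu using Real.rpow_nonneg hu.1.le _
  rw [← ofReal_integral_eq_lintegral_ofReal hint hnn]
  congr 1
  rw [← intervalIntegral.integral_of_le hs, integral_rpow (Or.inl (by norm_num))]
  rw [Real.sqrt_eq_rpow]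
  norm_num
  ring

lemma neg_half_int {s : ℝ} (hs : 0 ≤ s) :
    ∫⁻ u in Ioc (-s) 0, gfun u = ENNReal.ofReal (2 * Real.sqrt s) := by
  have h1 : ∫⁻ u in Ioc (-s) 0, gfun u = ∫⁻ u in Ico 0 s, gfun u := by
    rw [← lintegral_indicator measurableSet_Ioc, ← lintegral_indicator measurableSet_Ico]
    conv_lhs => rw [← Measure.map_neg_eq_self (volume : Measure ℝ)]
    rw [lintegral_map (gfun_meas.indicator measurableSet_Ioc) measurable_neg]
    congr 1
    ext u
    by_cases h : u ∈ Ico (0:ℝ) s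
    · have h2 : -u ∈ Ioc (-s) 0 := ⟨by simp only [Set.mem_Ico] at h; linarith [h.2],
        by simp only [Set.mem_Ico] at h; linarith [h.1]⟩
      rw [indicator_of_mem h2, indicator_of_mem h, gfun_neg]
    · have h2 : -u ∉ Ioc (-s) 0 := by
        simp only [Set.mem_Ico, not_and_or, not_lt, not_le] at h
        simp only [Set.mem_Ioc, not_and_or, not_lt, not_le]
        rcases h with h | h
        · right; linarith
        · left; linarith
      rw [indicator_of_notMem h2, indicator_of_notMem h]
  rw [h1, setLIntegral_congr Ico_ae_eq_Ioc, half_int hs]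

lemma sym_int {s : ℝ} (hs : 0 ≤ s) :
    ∫⁻ u in Ioc (-s) s, gfun u ≤ ENNReal.ofReal (4 * Real.sqrt s) := by
  rw [← Set.Ioc_union_Ioc_eq_Ioc (by linarith : -s ≤ 0) hs]
  calc ∫⁻ u in Ioc (-s) 0 ∪ Ioc 0 s, gfun u
      ≤ (∫⁻ u in Ioc (-s) 0, gfun u) + ∫⁻ u in Ioc 0 s, gfun u :=
        lintegral_union_le _ _ _
    _ = ENNReal.ofReal (2 * Real.sqrt s) + ENNReal.ofReal (2 * Real.sqrt s) := by
        rw [neg_half_int hs, half_int hs]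
    _ = ENNReal.ofReal (4 * Real.sqrt s) := by
        rw [← ENNReal.ofReal_add (by positivity) (by positivity)]; ring_nf

lemma lint_affine {b : ℝ} (hb : b ≠ 0) (t : ℝ) (F : ℝ → ℝ≥0∞) (hF : Measurable F) :
    ∫⁻ c, F (t + b * c) = ENNReal.ofReal |b⁻¹| * ∫⁻ u, F u := by
  have hmap : Measure.map (fun c : ℝ => t + b * c) volume
      = ENNReal.ofReal |b⁻¹| • volume := by
    have : (fun c : ℝ => t + b * c) = (fun u : ℝ => t + u) ∘ fun c : ℝ => b * c := rfl
    rw [this, ← Measure.map_map (measurable_const_add t) (measurable_const_mul b),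
      Real.map_volume_mul_left hb, Measure.map_smul,
      map_add_left_eq_self volume t]
  rw [← lintegral_map hF (show Measurable fun c : ℝ => t + b * c by fun_prop), hmap,
    lintegral_smul_measure, smul_eq_mul]

lemma inner_bound {b : ℝ} (hb : b ≠ 0) (a R : ℝ) (hR : 0 ≤ R) :
    ∫⁻ c in Ioc (-R) R, gfun (a ^ 2 + b * c)
      ≤ ENNReal.ofReal ((2 * R + 4) * |b| ^ (-(1:ℝ)/2)) := by
  have hbpos : 0 < |b| := abs_pos.mpr hb
  set w : ℝ := |b| ^ (-(1:ℝ)/2) with hw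
  have hwnn : 0 ≤ w := Real.rpow_nonneg (abs_nonneg b) _
  have hpt : ∀ u : ℝ, gfun u ≤ ENNReal.ofReal w + (Ioc (-|b|) |b|).indicator gfun u := by
    intro u
    by_cases h : u ∈ Ioc (-|b|) |b|
    · rw [indicator_of_mem h]; exact le_add_self
    · have hle : |b| ≤ |u| := by
        simp only [Set.mem_Ioc, not_and_or, not_lt, not_le] at h
        rcases h with h | h
        · exact le_trans (by linarith : |b| ≤ -u) (neg_le_abs u)
        · exact le_trans h.le (le_abs_self u)
      refine le_trans ?_ le_self_add
      exact ENNReal.ofReal_le_ofReal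
        (Real.rpow_le_rpow_of_nonpos hbpos hle (by norm_num))
  have hHmeas : Measurable ((Ioc (-|b|) |b|).indicator gfun) :=
    gfun_meas.indicator measurableSet_Ioc
  calc ∫⁻ c in Ioc (-R) R, gfun (a ^ 2 + b * c)
      ≤ ∫⁻ c in Ioc (-R) R,
          (ENNReal.ofReal w + (Ioc (-|b|) |b|).indicator gfun (a ^ 2 + b * c)) :=
        lintegral_mono fun c => hpt _
    _ = ENNReal.ofReal w * volume (Ioc (-R) R)
        + ∫⁻ c in Ioc (-R) R, (Ioc (-|b|) |b|).indicator gfun (a ^ 2 + b * c) := by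
        rw [lintegral_add_left measurable_const, setLIntegral_const]
    _ ≤ ENNReal.ofReal w * ENNReal.ofReal (2 * R)
        + ∫⁻ c, (Ioc (-|b|) |b|).indicator gfun (a ^ 2 + b * c) := by
        gcongr
        · rw [Real.volume_Ioc]; exact le_of_eq (by ring_nf)
        · exact Measure.restrict_le_self
    _ = ENNReal.ofReal w * ENNReal.ofReal (2 * R)
        + ENNReal.ofReal |b⁻¹| * ∫⁻ u in Ioc (-|b|) |b|, gfun u := by
        rw [lint_affine hb (a ^ 2) _ hHmeas, lintegral_indicator measurableSet_Ioc]
    _ ≤ ENNReal.ofReal w * ENNReal.ofReal (2 * R)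
        + ENNReal.ofReal |b⁻¹| * ENNReal.ofReal (4 * Real.sqrt |b|) := by
        gcongr
        exact sym_int (abs_nonneg b)
    _ = ENNReal.ofReal ((2 * R + 4) * w) := by
        rw [← ENNReal.ofReal_mul hwnn, ← ENNReal.ofReal_mul (abs_nonneg b⁻¹),
          ← ENNReal.ofReal_add (by positivity) (by positivity)]
        congr 1
        have hsq : |b⁻¹| * (4 * Real.sqrt |b|) = 4 * w := by
          rw [abs_inv, Real.sqrt_eq_rpow, hw,
            show (-(1:ℝ)/2) = -1 + 1/2 by norm_num, Real.rpow_add hbpos,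
            Real.rpow_neg_one]
          ring
        rw [hsq]; ring

lemma mid_bound (a : ℝ) {R : ℝ} (hR : 0 ≤ R) :
    ∫⁻ b in Ioc (-R) R, ∫⁻ c in Ioc (-R) R, gfun (a ^ 2 + b * c)
      ≤ ENNReal.ofReal (2 * R + 4) * ENNReal.ofReal (4 * Real.sqrt R) := by
  have h0 : ∀ᵐ b : ℝ ∂(volume.restrict (Ioc (-R) R)), b ≠ 0 := by
    refine ae_restrict_of_ae ?_
    rw [ae_iff]
    simp only [not_not, Set.setOf_eq_eq_singleton]
    exact measure_singleton 0
  calc ∫⁻ b in Ioc (-R) R, ∫⁻ c in Ioc (-R) R, gfun (a ^ 2 + b * c)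
      ≤ ∫⁻ b in Ioc (-R) R, ENNReal.ofReal (2 * R + 4) * gfun b := by
        refine lintegral_mono_ae ?_
        filter_upwards [h0] with b hb
        refine le_trans (inner_bound hb a R hR) ?_
        rw [ENNReal.ofReal_mul (by positivity)]
        simp only [gfun]
        exact le_rfl
    _ = ENNReal.ofReal (2 * R + 4) * ∫⁻ b in Ioc (-R) R, gfun b :=
        lintegral_const_mul _ gfun_meas
    _ ≤ ENNReal.ofReal (2 * R + 4) * ENNReal.ofReal (4 * Real.sqrt R) := by
        gcongr
        exact sym_int hR

lemma box_int {R : ℝ} (hR : 0 ≤ R) :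
    ∫⁻ p : ℝ × ℝ × ℝ in Ioc (-R) R ×ˢ Ioc (-R) R ×ˢ Ioc (-R) R,
      gfun (p.1 ^ 2 + p.2.1 * p.2.2) < ⊤ := by
  set I := Ioc (-R) R with hI
  have hGmeas : Measurable fun p : ℝ × ℝ × ℝ => gfun (p.1 ^ 2 + p.2.1 * p.2.2) :=
    gfun_meas.comp (by fun_prop)
  have h1 : (volume : Measure (ℝ × ℝ × ℝ)).restrict (I ×ˢ I ×ˢ I)
      = ((volume : Measure ℝ).restrict I).prod
          (((volume : Measure ℝ).restrict I).prod ((volume : Measure ℝ).restrict I)) := by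
    rw [Measure.prod_restrict, Measure.prod_restrict, ← Measure.volume_eq_prod,
      ← Measure.volume_eq_prod]
  rw [show (∫⁻ p : ℝ × ℝ × ℝ in I ×ˢ I ×ˢ I, gfun (p.1 ^ 2 + p.2.1 * p.2.2))
      = ∫⁻ p : ℝ × ℝ × ℝ, gfun (p.1 ^ 2 + p.2.1 * p.2.2)
        ∂(((volume : Measure ℝ).restrict I).prod
          (((volume : Measure ℝ).restrict I).prod ((volume : Measure ℝ).restrict I)))
      from by rw [← h1]]
  rw [lintegral_prod _ hGmeas.aemeasurable]
  set C := ENNReal.ofReal (2 * R + 4) * ENNReal.ofReal (4 * Real.sqrt R) with hC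
  refine lt_of_le_of_lt (lintegral_mono (g := fun _ => C) fun a => ?_) ?_
  · refine le_trans (le_of_eq (lintegral_prod _
      ((gfun_meas.comp (show Measurable fun q : ℝ × ℝ => a ^ 2 + q.1 * q.2 by fun_prop))
        |>.aemeasurable))) ?_
    exact mid_bound a hR
  · rw [lintegral_const, Measure.restrict_apply_univ]
    refine ENNReal.mul_lt_top (ENNReal.mul_lt_top ?_ ?_) ?_ <;>
      simp [hI, Real.volume_Ioc, lt_top_iff_ne_top, ENNReal.mul_eq_top]

/-- Identifying `sl(2,ℝ)` with `ℝ³` via `(a,b,c) ↦ [[a,b],[c,-a]]`, the function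
`(a,b,c) ↦ |a² + bc|^(-1/2)` (extended by `0` on the measure-zero set `{a² + bc = 0}`,
as `Real.rpow` does) is locally integrable on `ℝ³` with respect to Lebesgue measure:
the denominator in the fixed point character formula for `SL(2,ℝ)` is in `L¹_loc`. -/
theorem locallyIntegrable_inv_sqrt_discriminant :
    MeasureTheory.LocallyIntegrable
      (fun p : ℝ × ℝ × ℝ => |p.1 ^ 2 + p.2.1 * p.2.2| ^ (-(1 : ℝ) / 2))
      MeasureTheory.volume := by
  intro x
  set R : ℝ := |x.1| + |x.2.1| + |x.2.2| + 1 with hR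
  have hR0 : 0 ≤ R := by positivity
  have hfmeas : Measurable fun p : ℝ × ℝ × ℝ => |p.1 ^ 2 + p.2.1 * p.2.2| ^ (-(1 : ℝ) / 2) :=
    (((measurable_fst.pow_const 2).add
      (measurable_snd.fst.mul measurable_snd.snd)).abs).pow measurable_const
  refine ⟨Ioo (-R) R ×ˢ Ioo (-R) R ×ˢ Ioo (-R) R, ?_, ?_⟩
  · refine (IsOpen.mem_nhds (isOpen_Ioo.prod (isOpen_Ioo.prod isOpen_Ioo)) ?_)
    refine ⟨?_, ?_, ?_⟩ <;>
      constructor <;>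
      · rw [hR]
        cases abs_cases x.1 <;> cases abs_cases x.2.1 <;> cases abs_cases x.2.2 <;> linarith
  · refine IntegrableOn.mono_set ?_
      (Set.prod_mono Ioo_subset_Ioc_self (Set.prod_mono Ioo_subset_Ioc_self Ioo_subset_Ioc_self))
    refine ⟨hfmeas.aestronglyMeasurable, ?_⟩
    rw [hasFiniteIntegral_iff_ofReal (Filter.Eventually.of_forall fun p =>
      Real.rpow_nonneg (abs_nonneg _) _)]
    exact box_int hR0
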